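/- Let c ∈ ℝ^{m×m}. Then the minimum of Σ_{i,r} c_{ir} w_{ir} over all (w,y) ∈ Q̄₁ equals the minimum of Σ_{i,r} c_{ir} w_{ir} over all w ∈ 𝒜ₙ (Problem LP̄₁ and Problem LAP have the same optimal objective value). -/
import Mathlib


/-- The assignment (Birkhoff) polytope `𝒜ₙ` (with `m = n - 1`): the set of
`m × m` doubly stochastic matrices.  Index `i : Fin m` stands for city `i+1`
(a city in `{1,…,m}`), index `r : Fin m` for stage/position `r+1`. -/
def assignmentPolytope (m : ℕ) : Set (Fin m → Fin m → ℝ) :=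
  {w | (∀ i, ∑ r, w i r = 1) ∧ (∀ r, ∑ i, w i r = 1) ∧ ∀ i r, 0 ≤ w i r}

/-- The polytope `Q̄₁`.  Cities are `Fin (m+1)` (city `0` is the depot, and
`i.succ : Fin (m+1)` is city `i+1` for `i : Fin m`).  The `y`-variables are
indexed by ordered pairs of distinct cities; the (nonexistent) diagonal
entries are pinned to `0`. -/
def Qbar1 (m : ℕ) :
    Set ((Fin m → Fin m → ℝ) × (Fin (m + 1) → Fin (m + 1) → ℝ)) :=
  {p |
    p.1 ∈ assignmentPolytope m ∧
    (∀ i, p.2 i i = 0) ∧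
    (∀ i r : Fin m, r.val = 0 → p.2 0 i.succ = p.1 i r) ∧
    (∀ i r : Fin m, r.val = m - 1 → p.2 i.succ 0 = p.1 i r) ∧
    (∀ i j r r' : Fin m, i ≠ j → r'.val = r.val + 1 →
      p.1 i r + p.1 j r' - p.2 i.succ j.succ ≤ 1) ∧
    (∑ i : Fin m, ∑ j : Fin m, if i = j then 0 else p.2 i.succ j.succ) = (m : ℝ) - 1 ∧
    (∀ i j, 0 ≤ p.2 i j)}

/-- The permutation matrix `ŵ` of a permutation `u` of `{1,…,m}`:
`ŵ_{ir} = 1` iff city `i+1` is visited at stage `r+1`, i.e. iff `i = u r`. -/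
def permMatrix (m : ℕ) (u : Equiv.Perm (Fin m)) : Fin m → Fin m → ℝ :=
  fun i r => if i = u r then 1 else 0

/-- The tour incidence vector `ȳ^u` of a permutation `u` of `{1,…,m}`:
`ȳ^u_{0,u(1)} = 1`, `ȳ^u_{u(m),0} = 1`, `ȳ^u_{u(q),u(q+1)} = 1` for
`q = 1,…,m−1`, and all other entries are `0`. -/
def tourVec (m : ℕ) (u : Equiv.Perm (Fin m)) : Fin (m + 1) → Fin (m + 1) → ℝ :=
  fun a b =>
    if (∃ r : Fin m, r.val = 0 ∧ a = 0 ∧ b = (u r).succ) ∨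
        (∃ r : Fin m, r.val = m - 1 ∧ a = (u r).succ ∧ b = 0) ∨
        (∃ q q' : Fin m, q'.val = q.val + 1 ∧ a = (u q).succ ∧ b = (u q').succ)
    then 1 else 0

/-- "The TSP polytope" `𝒫ₙ` (with `m = n - 1`): the convex hull of the tour
incidence vectors. -/
def tspPolytope (m : ℕ) : Set (Fin (m + 1) → Fin (m + 1) → ℝ) :=
  convexHull ℝ {y | ∃ u : Equiv.Perm (Fin m), y = tourVec m u}

/-- The cost `d(0,u(1)) + Σ_{q=1}^{m−1} d(u(q),u(q+1)) + d(u(m),0)` of the TSP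
tour `0 → u(1) → … → u(m) → 0` associated with a permutation `u` of `{1,…,m}`. -/
def tourCost (m : ℕ) (d : Fin (m + 1) → Fin (m + 1) → ℝ) (u : Equiv.Perm (Fin m)) : ℝ :=
  (∑ r : Fin m, if r.val = 0 then d 0 ((u r).succ) else 0) +
  (∑ q : Fin m, ∑ q' : Fin m, if q'.val = q.val + 1 then d ((u q).succ) ((u q').succ) else 0) +
  (∑ r : Fin m, if r.val = m - 1 then d ((u r).succ) 0 else 0)

lemma permMatrix_mem_AP (m : ℕ) (u : Equiv.Perm (Fin m)) :
    permMatrix m u ∈ assignmentPolytope m := by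
  refine ⟨fun i => ?_, fun r => ?_, fun i r => by unfold permMatrix; split <;> norm_num⟩
  · simp only [permMatrix]
    rw [Equiv.sum_comp u (fun r => if i = r then (1:ℝ) else 0)]
    simp
  · simp [permMatrix]

lemma tourVec_nonneg (m : ℕ) (u : Equiv.Perm (Fin m)) (a b : Fin (m+1)) :
    0 ≤ tourVec m u a b := by unfold tourVec; split <;> norm_num

lemma tourVec_succ_succ (m : ℕ) (u : Equiv.Perm (Fin m)) (i j : Fin m) :
    tourVec m u i.succ j.succ =
      if ∃ q q' : Fin m, q'.val = q.val + 1 ∧ i = u q ∧ j = u q' then 1 else 0 := by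
  unfold tourVec
  refine if_congr ⟨?_, ?_⟩ rfl rfl
  · rintro (⟨r, _, ha, _⟩ | ⟨r, _, _, hb⟩ | ⟨q, q', h, ha, hb⟩)
    · exact absurd ha (Fin.succ_ne_zero i)
    · exact absurd hb (Fin.succ_ne_zero j)
    · exact ⟨q, q', h, Fin.succ_injective _ ha, Fin.succ_injective _ hb⟩
  · rintro ⟨q, q', h, rfl, rfl⟩
    exact Or.inr (Or.inr ⟨q, q', h, rfl, rfl⟩)

lemma tour_mem_Qbar1 (m : ℕ) (hm : 0 < m) (u : Equiv.Perm (Fin m)) :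
    (permMatrix m u, tourVec m u) ∈ Qbar1 m := by
  refine ⟨permMatrix_mem_AP m u, ?_, ?_, ?_, ?_, ?_, fun a b => tourVec_nonneg m u a b⟩
  · -- diagonal zero
    intro a
    show tourVec m u a a = 0
    unfold tourVec
    rw [if_neg]
    rintro (⟨r, _, rfl, hb⟩ | ⟨r, _, rfl, hb⟩ | ⟨q, q', h, rfl, hb⟩)
    · exact Fin.succ_ne_zero _ hb.symm
    · exact Fin.succ_ne_zero _ hb
    · exact absurd (u.injective (Fin.succ_injective _ hb)).symm (by
        intro hq; rw [hq] at h; omega)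
  · -- start
    intro i r hr
    show tourVec m u 0 i.succ = permMatrix m u i r
    unfold tourVec permMatrix
    refine if_congr ⟨?_, ?_⟩ rfl rfl
    · rintro (⟨r0, hr0, _, hb⟩ | ⟨r0, _, ha, _⟩ | ⟨q, q', _, ha, _⟩)
      · have : r0 = r := Fin.ext (by omega)
        rw [← this]; exact Fin.succ_injective _ hb
      · exact absurd ha.symm (Fin.succ_ne_zero _)
      · exact absurd ha.symm (Fin.succ_ne_zero _)
    · rintro rfl
      exact Or.inl ⟨r, hr, rfl, rfl⟩
  · -- end
    intro i r hr
    show tourVec m u i.succ 0 = permMatrix m u i r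
    unfold tourVec permMatrix
    refine if_congr ⟨?_, ?_⟩ rfl rfl
    · rintro (⟨r0, _, _, hb⟩ | ⟨r0, hr0, ha, _⟩ | ⟨q, q', _, _, hb⟩)
      · exact absurd hb.symm (Fin.succ_ne_zero _)
      · have : r0 = r := Fin.ext (by omega)
        rw [← this]; exact Fin.succ_injective _ ha
      · exact absurd hb.symm (Fin.succ_ne_zero _)
    · rintro rfl
      exact Or.inr (Or.inl ⟨r, hr, rfl, rfl⟩)
  · -- inequality
    intro i j r r' hij hrr'
    show permMatrix m u i r + permMatrix m u j r' - tourVec m u i.succ j.succ ≤ 1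
    unfold permMatrix
    by_cases h1 : i = u r
    · by_cases h2 : j = u r'
      · rw [tourVec_succ_succ, if_pos h1, if_pos h2,
          if_pos (show ∃ q q' : Fin m, q'.val = q.val + 1 ∧ i = u q ∧ j = u q' from
            ⟨r, r', hrr', h1, h2⟩)]
        norm_num
      · have := tourVec_nonneg m u i.succ j.succ
        rw [if_neg h2, if_pos h1]; linarith
    · have := tourVec_nonneg m u i.succ j.succ
      rw [if_neg h1]
      have h2 : (if j = u r' then (1:ℝ) else 0) ≤ 1 := by split <;> norm_num
      linarith
  · -- sum
    have key : ∀ i j : Fin m, (if i = j then (0:ℝ) else tourVec m u i.succ j.succ) =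
        if ∃ q q' : Fin m, q'.val = q.val + 1 ∧ i = u q ∧ j = u q' then 1 else 0 := by
      intro i j
      rcases eq_or_ne i j with rfl | h
      · rw [if_pos rfl, if_neg]
        rintro ⟨q, q', h, rfl, hb⟩
        have := u.injective hb.symm
        rw [this] at h; omega
      · rw [if_neg h, tourVec_succ_succ]
    simp_rw [key]
    rw [← Equiv.sum_comp u (fun i => ∑ j : Fin m,
        if ∃ q q' : Fin m, q'.val = q.val + 1 ∧ i = u q ∧ j = u q' then (1:ℝ) else 0)]
    have inner : ∀ a : Fin m, (∑ j : Fin m,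
        if ∃ q q' : Fin m, q'.val = q.val + 1 ∧ u a = u q ∧ j = u q' then (1:ℝ) else 0)
        = if a.val + 1 < m then 1 else 0 := by
      intro a
      rw [← Equiv.sum_comp u (fun j => if ∃ q q' : Fin m,
          q'.val = q.val + 1 ∧ u a = u q ∧ j = u q' then (1:ℝ) else 0)]
      have : ∀ b : Fin m, (∃ q q' : Fin m, q'.val = q.val + 1 ∧ u a = u q ∧ u b = u q')
          ↔ b.val = a.val + 1 := by
        intro b
        constructor
        · rintro ⟨q, q', h, ha, hb⟩
          rw [u.injective ha, u.injective hb]; exact h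
        · intro h; exact ⟨a, b, h, rfl, rfl⟩
      simp_rw [this]
      by_cases hlt : a.val + 1 < m
      · rw [Finset.sum_eq_single (⟨a.val + 1, hlt⟩ : Fin m)]
        · rw [if_pos rfl, if_pos hlt]
        · intro b _ hb
          rw [if_neg]; intro hbv; exact hb (Fin.ext hbv)
        · intro habs; exact absurd (Finset.mem_univ _) habs
      · rw [if_neg hlt, Finset.sum_eq_zero]
        intro b _
        rw [if_neg]; intro hbv
        exact hlt (hbv ▸ b.isLt)
    simp_rw [inner]
    have : ∀ a : Fin m, (if a.val + 1 < m then (1:ℝ) else 0)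
        = 1 - (if a = (⟨m - 1, by omega⟩ : Fin m) then 1 else 0) := by
      intro a
      rcases eq_or_ne a (⟨m - 1, by omega⟩ : Fin m) with rfl | h
      · rw [if_pos rfl, if_neg (by simp; omega)]; norm_num
      · rw [if_neg h, if_pos]
        · norm_num
        · have : a.val ≠ m - 1 := fun hh => h (Fin.ext hh)
          have := a.isLt; omega
    simp_rw [this]
    rw [Finset.sum_sub_distrib, Finset.sum_const, Finset.card_univ, Fintype.card_fin,
      Finset.sum_ite_eq' Finset.univ (⟨m - 1, by omega⟩ : Fin m) (fun _ => (1:ℝ)),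
      if_pos (Finset.mem_univ _)]
    simp

lemma obj_linear (m : ℕ) (c : Fin m → Fin m → ℝ) :
    IsLinearMap ℝ (fun w : Fin m → Fin m → ℝ => ∑ i, ∑ r, c i r * w i r) := by
  constructor
  · intro x y
    simp [mul_add, Finset.sum_add_distrib]
  · intro s x
    simp only [Pi.smul_apply, smul_eq_mul, Finset.mul_sum]
    congr 1; ext i; congr 1; ext r; ring

lemma mlperm_eq (m : ℕ) (σ : Equiv.Perm (Fin m)) :
    (σ.permMatrix ℝ : Fin m → Fin m → ℝ) = permMatrix m σ⁻¹ := by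
  funext i r
  simp only [Equiv.Perm.permMatrix, PEquiv.toMatrix_apply, Equiv.toPEquiv_apply,
    Option.mem_def, Option.some.injEq, permMatrix]
  refine if_congr ?_ rfl rfl
  rw [Equiv.Perm.inv_def]
  exact (Equiv.eq_symm_apply σ).symm

lemma main_aux (m : ℕ) (hm : 0 < m) (c : Fin m → Fin m → ℝ) :
    sInf {v : ℝ | ∃ p ∈ Qbar1 m, v = ∑ i, ∑ r, c i r * p.1 i r} =
      sInf {v : ℝ | ∃ w ∈ assignmentPolytope m, v = ∑ i, ∑ r, c i r * w i r} := by
  have hf := obj_linear m c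
  set f : (Fin m → Fin m → ℝ) → ℝ := fun w => ∑ i, ∑ r, c i r * w i r with hfdef
  have hAB : {v : ℝ | ∃ p ∈ Qbar1 m, v = f p.1} ⊆
      {v : ℝ | ∃ w ∈ assignmentPolytope m, v = f w} := by
    rintro v ⟨p, hp, rfl⟩
    exact ⟨p.1, hp.1, rfl⟩
  have hAne : {v : ℝ | ∃ p ∈ Qbar1 m, v = f p.1}.Nonempty :=
    ⟨f (permMatrix m 1), ⟨(permMatrix m 1, tourVec m 1), tour_mem_Qbar1 m hm 1, rfl⟩⟩
  have hBbdd : BddBelow {v : ℝ | ∃ w ∈ assignmentPolytope m, v = f w} := by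
    refine ⟨-(∑ i, ∑ r, |c i r|), ?_⟩
    rintro v ⟨w, ⟨hrow, hcol, hnn⟩, rfl⟩
    rw [hfdef, ← Finset.sum_neg_distrib]
    refine Finset.sum_le_sum fun i _ => ?_
    rw [← Finset.sum_neg_distrib]
    refine Finset.sum_le_sum fun r _ => ?_
    have hle1 : w i r ≤ 1 := by
      rw [← hcol r]
      exact Finset.single_le_sum (fun j _ => hnn j r) (Finset.mem_univ i)
    nlinarith [abs_nonneg (c i r), neg_abs_le (c i r), hnn i r]
  have hAbdd : BddBelow {v : ℝ | ∃ p ∈ Qbar1 m, v = f p.1} := hBbdd.mono hAB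
  have hne : (Finset.univ : Finset (Equiv.Perm (Fin m))).Nonempty := Finset.univ_nonempty
  set a : ℝ := Finset.univ.inf' hne (fun u : Equiv.Perm (Fin m) => f (permMatrix m u)) with ha
  obtain ⟨u₀, _, hu₀⟩ := Finset.exists_mem_eq_inf' hne
    (fun u : Equiv.Perm (Fin m) => f (permMatrix m u))
  have haA : a ∈ {v : ℝ | ∃ p ∈ Qbar1 m, v = f p.1} :=
    ⟨(permMatrix m u₀, tourVec m u₀), tour_mem_Qbar1 m hm u₀, hu₀⟩
  have hBa : ∀ v ∈ {v : ℝ | ∃ w ∈ assignmentPolytope m, v = f w}, a ≤ v := by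
    rintro v ⟨w, hw, rfl⟩
    have hw' : (Matrix.of w) ∈ convexHull ℝ
        {x : Matrix (Fin m) (Fin m) ℝ | ∃ σ : Equiv.Perm (Fin m), σ.permMatrix ℝ = x} := by
      rw [← doublyStochastic_eq_convexHull_permMatrix]
      exact mem_doublyStochastic_iff_sum.2 ⟨hw.2.2, hw.1, hw.2.1⟩
    have hsub : {x : Matrix (Fin m) (Fin m) ℝ | ∃ σ : Equiv.Perm (Fin m), σ.permMatrix ℝ = x}
        ⊆ {x : Matrix (Fin m) (Fin m) ℝ | a ≤ f x} := by
      rintro x ⟨σ, rfl⟩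
      show a ≤ f (σ.permMatrix ℝ)
      rw [show (σ.permMatrix ℝ : Fin m → Fin m → ℝ) = permMatrix m σ⁻¹ from mlperm_eq m σ]
      exact Finset.inf'_le _ (Finset.mem_univ σ⁻¹)
    have hconv : Convex ℝ {x : Matrix (Fin m) (Fin m) ℝ | a ≤ f x} :=
      convex_halfSpace_ge hf a
    exact convexHull_min hsub hconv hw'
  apply le_antisymm
  · refine le_csInf ⟨f (permMatrix m 1), ⟨permMatrix m 1, permMatrix_mem_AP m 1, rfl⟩⟩ ?_
    intro b hb
    exact le_trans (csInf_le hAbdd haA) (hBa b hb)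
  · exact csInf_le_csInf hBbdd hAne hAB

/-- For any cost matrix `c`, the minimum of
`Σ_{i,r} c_{ir} w_{ir}` over all `(w, y) ∈ Q̄₁` equals the minimum of
`Σ_{i,r} c_{ir} w_{ir}` over all `w ∈ 𝒜ₙ` (Problem `LP̄₁` and Problem `LAP`
have the same optimal objective value). -/
theorem Qbar1_LAP_same_optimal_value (n : ℕ) (hn : 3 ≤ n)
    (c : Fin (n - 1) → Fin (n - 1) → ℝ) :
    sInf {v : ℝ | ∃ p ∈ Qbar1 (n - 1), v = ∑ i, ∑ r, c i r * p.1 i r} =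
      sInf {v : ℝ | ∃ w ∈ assignmentPolytope (n - 1), v = ∑ i, ∑ r, c i r * w i r} :=
  main_aux (n - 1) (by omega) c
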